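/- Let (x_t) be a sequence in E, (y_t) a sequence in F, and (L_t) positive reals. Suppose for every t: the gradient of the map x ↦ f(x, y_t) is Lipschitz continuous with constant L_t; x_{t+1} is a global minimizer of x ↦ f(x, y_t); y_{t+1} satisfies f(x_{t+1}, y_{t+1}) ≤ f(x_{t+1}, y_t) and ∇_y f(x_t, y_t) = 0. Then for every T ≥ 1, the sum over t = 0, …, T−1 of (1/(2·L_t))·‖∇ f(x_t, y_t)‖² is at most f(x_0, y_0) − f(x_T, y_T), and consequently min over t ∈ {0,…,T−1} of ‖∇ f(x_t, y_t)‖² ≤ 2·L*·(f(x_0,y_0) − f(x_T,y_T))/T where L* = max of L_t over t = 0, …, T−1. -/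

import Mathlib

open RealInnerProductSpace

lemma descent_lemma {E : Type*} [NormedAddCommGroup E] [InnerProductSpace ℝ E] [CompleteSpace E]
    (g : E → ℝ) (hg : Differentiable ℝ g) (L : ℝ)
    (hlip : ∀ a b : E, ‖gradient g b - gradient g a‖ ≤ L * ‖b - a‖) (a v : E) :
    g (a + v) ≤ g a + ⟪gradient g a, v⟫ + L / 2 * ‖v‖ ^ 2 := by
  set c : ℝ := ⟪gradient g a, v⟫ with hc
  set d : ℝ := ‖v‖ ^ 2 with hd
  set ψ : ℝ → ℝ := fun t => g (a + t • v) - t * c - L * d / 2 * t ^ 2 with hψdef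
  have hline : ∀ t : ℝ, HasDerivAt (fun s : ℝ => a + s • v) v t := by
    intro t
    simpa using ((hasDerivAt_id t).smul_const v).const_add a
  have hφ : ∀ t : ℝ, HasDerivAt (fun s => g (a + s • v)) ⟪gradient g (a + t • v), v⟫ t := by
    intro t
    have h1 := ((hg (a + t • v)).hasGradientAt).hasFDerivAt
    have := h1.comp_hasDerivAt t (hline t)
    simpa [Function.comp_def] using this
  have hψ : ∀ t : ℝ, HasDerivAt ψ
      (⟪gradient g (a + t • v), v⟫ - c - L * d / 2 * (2 * t)) t := by
    intro t
    have h2 : HasDerivAt (fun s : ℝ => s * c) c t := hasDerivAt_mul_const c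
    have h3 : HasDerivAt (fun s : ℝ => L * d / 2 * s ^ 2) (L * d / 2 * (2 * t)) t := by
      simpa using (hasDerivAt_pow 2 t).const_mul (L * d / 2)
    exact ((hφ t).sub h2).sub h3
  have hanti : AntitoneOn ψ (Set.Icc 0 1) := by
    apply antitoneOn_of_deriv_nonpos (convex_Icc 0 1)
    · exact fun t _ => ((hψ t).continuousAt).continuousWithinAt
    · intro t ht
      exact ((hψ t).differentiableAt).differentiableWithinAt
    · intro t ht
      rw [interior_Icc] at ht
      rw [(hψ t).deriv]
      have key : ⟪gradient g (a + t • v), v⟫ - c ≤ L * t * d := by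
        have h4 : ⟪gradient g (a + t • v), v⟫ - c =
            ⟪gradient g (a + t • v) - gradient g a, v⟫ := by
          rw [inner_sub_left]
        rw [h4]
        calc ⟪gradient g (a + t • v) - gradient g a, v⟫
            ≤ ‖gradient g (a + t • v) - gradient g a‖ * ‖v‖ := real_inner_le_norm _ _
          _ ≤ (L * ‖(a + t • v) - a‖) * ‖v‖ := by
              apply mul_le_mul_of_nonneg_right (hlip a _) (norm_nonneg v)
          _ = L * t * d := by
              rw [add_sub_cancel_left, norm_smul, Real.norm_eq_abs,
                abs_of_pos ht.1, hd]; ring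
      nlinarith [key]
  have h01 : ψ 1 ≤ ψ 0 :=
    hanti (Set.mem_Icc.mpr ⟨le_refl 0, zero_le_one⟩) (Set.mem_Icc.mpr ⟨zero_le_one, le_refl 1⟩)
      zero_le_one
  simp only [hψdef, one_smul, zero_smul, add_zero, one_mul, one_pow, zero_mul,
    mul_zero, sub_zero, zero_pow, ne_eq, OfNat.ofNat_ne_zero, not_false_eq_true] at h01
  linarith

lemma exact_min_step {E : Type*} [NormedAddCommGroup E] [InnerProductSpace ℝ E] [CompleteSpace E]
    (g : E → ℝ) (hg : Differentiable ℝ g) (L : ℝ) (hL : 0 < L)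
    (hlip : ∀ a b : E, ‖gradient g b - gradient g a‖ ≤ L * ‖b - a‖)
    (a m : E) (hmin : ∀ z : E, g m ≤ g z) :
    g m ≤ g a - 1 / (2 * L) * ‖gradient g a‖ ^ 2 := by
  set w := gradient g a with hw
  have h := descent_lemma g hg L hlip a (-(1 / L) • w)
  have hinner : ⟪w, -(1 / L) • w⟫ = -(1 / L) * ‖w‖ ^ 2 := by
    rw [real_inner_smul_right, real_inner_self_eq_norm_sq]
  have hnorm : ‖-(1 / L) • w‖ ^ 2 = (1 / L) ^ 2 * ‖w‖ ^ 2 := by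
    rw [norm_smul, mul_pow, Real.norm_eq_abs]
    congr 1
    rw [abs_neg, sq_abs]
  rw [hinner, hnorm] at h
  have := hmin (a + -(1 / L) • w)
  have hL' : L ≠ 0 := ne_of_gt hL
  calc g m ≤ g (a + -(1 / L) • w) := hmin _
    _ ≤ g a + -(1 / L) * ‖w‖ ^ 2 + L / 2 * ((1 / L) ^ 2 * ‖w‖ ^ 2) := h
    _ = g a - 1 / (2 * L) * ‖w‖ ^ 2 := by field_simp; ring

/-- Theorem 1 combined with the Corollary: two-block coordinate descent
with exact minimization in the `x`-block, under per-block Lipschitz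
constants `Lₜ`, has the summed descent inequality and the O(1/√T) rate. -/
theorem two_block_exact_min_rate
    {E F : Type*} [NormedAddCommGroup E] [InnerProductSpace ℝ E] [CompleteSpace E]
    [NormedAddCommGroup F] [InnerProductSpace ℝ F] [CompleteSpace F]
    (f : E × F → ℝ) (hf : Differentiable ℝ f)
    (x : ℕ → E) (y : ℕ → F) (L : ℕ → ℝ) (hL : ∀ t, 0 < L t)
    (hlip : ∀ t, ∀ a b : E,
      ‖gradient (fun x' => f (x', y t)) b - gradient (fun x' => f (x', y t)) a‖ ≤
        L t * ‖b - a‖)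
    (hxmin : ∀ t, ∀ z : E, f (x (t + 1), y t) ≤ f (z, y t))
    (hy : ∀ t, f (x (t + 1), y (t + 1)) ≤ f (x (t + 1), y t))
    (h1 : ∀ t, gradient (fun y' => f (x t, y')) (y t) = 0) :
    ∀ T : ℕ, ∀ hT : 1 ≤ T,
      (∑ t ∈ Finset.range T,
          (1 / (2 * L t)) *
            (‖gradient (fun x' => f (x', y t)) (x t)‖ ^ 2 +
              ‖gradient (fun y' => f (x t, y')) (y t)‖ ^ 2) ≤
        f (x 0, y 0) - f (x T, y T)) ∧
      (Finset.range T).inf' (Finset.nonempty_range_iff.mpr (by omega))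
          (fun t =>
            ‖gradient (fun x' => f (x', y t)) (x t)‖ ^ 2 +
              ‖gradient (fun y' => f (x t, y')) (y t)‖ ^ 2) ≤
        2 * ((Finset.range T).sup' (Finset.nonempty_range_iff.mpr (by omega)) L) *
          (f (x 0, y 0) - f (x T, y T)) / T := by
  intro T hT
  set G : ℕ → ℝ := fun t =>
    ‖gradient (fun x' => f (x', y t)) (x t)‖ ^ 2 +
      ‖gradient (fun y' => f (x t, y')) (y t)‖ ^ 2 with hG
  have hGzero : ∀ t, G t = ‖gradient (fun x' => f (x', y t)) (x t)‖ ^ 2 := by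
    intro t; simp [hG, h1 t]
  have hGnonneg : ∀ t, 0 ≤ G t := by
    intro t; rw [hGzero]; positivity
  -- per-step descent
  have hstep : ∀ t, f (x (t + 1), y (t + 1)) ≤ f (x t, y t) - 1 / (2 * L t) * G t := by
    intro t
    have hgdiff : Differentiable ℝ (fun x' => f (x', y t)) :=
      hf.comp (differentiable_id.prodMk (differentiable_const _))
    have := exact_min_step (fun x' => f (x', y t)) hgdiff (L t) (hL t) (hlip t)
      (x t) (x (t + 1)) (hxmin t)
    rw [hGzero]
    calc f (x (t + 1), y (t + 1)) ≤ f (x (t + 1), y t) := hy t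
      _ ≤ f (x t, y t) - 1 / (2 * L t) * ‖gradient (fun x' => f (x', y t)) (x t)‖ ^ 2 := this
  -- telescoping sum
  have hsum : ∀ S : ℕ, ∑ t ∈ Finset.range S, (1 / (2 * L t)) * G t ≤
      f (x 0, y 0) - f (x S, y S) := by
    intro S
    induction S with
    | zero => simp
    | succ n ih =>
      rw [Finset.sum_range_succ]
      have := hstep n
      linarith
  have hne : (Finset.range T).Nonempty := Finset.nonempty_range_iff.mpr (by omega)
  refine ⟨hsum T, ?_⟩
  set Ls : ℝ := (Finset.range T).sup' (Finset.nonempty_range_iff.mpr (by omega)) L with hLs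
  set m : ℝ := (Finset.range T).inf' (Finset.nonempty_range_iff.mpr (by omega)) G with hm
  have hLsLe : ∀ t ∈ Finset.range T, L t ≤ Ls := fun t ht => Finset.le_sup' L ht
  have hLspos : 0 < Ls := lt_of_lt_of_le (hL 0)
    (Finset.le_sup' L (Finset.mem_range.mpr (by omega)))
  have hmle : ∀ t ∈ Finset.range T, m ≤ G t := fun t ht => Finset.inf'_le G ht
  have hbound : (T : ℝ) * (m / (2 * Ls)) ≤ f (x 0, y 0) - f (x T, y T) := by
    calc (T : ℝ) * (m / (2 * Ls)) = ∑ _t ∈ Finset.range T, m / (2 * Ls) := by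
          rw [Finset.sum_const, Finset.card_range, nsmul_eq_mul]
      _ ≤ ∑ t ∈ Finset.range T, (1 / (2 * L t)) * G t := by
          apply Finset.sum_le_sum
          intro t ht
          have hLt := hL t
          have h5 : 1 / (2 * Ls) ≤ 1 / (2 * L t) := by
            apply one_div_le_one_div_of_le (by linarith)
            linarith [hLsLe t ht]
          calc m / (2 * Ls) ≤ G t / (2 * Ls) := by
                gcongr
                exact hmle t ht
            _ ≤ (1 / (2 * L t)) * G t := by
                rw [div_eq_mul_one_div, mul_comm]
                exact mul_le_mul_of_nonneg_right h5 (hGnonneg t)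
      _ ≤ f (x 0, y 0) - f (x T, y T) := hsum T
  have hTpos : (0 : ℝ) < T := by exact_mod_cast by omega
  rw [le_div_iff₀ hTpos]
  have h2Ls : (0 : ℝ) < 2 * Ls := by linarith
  have h6 := mul_le_mul_of_nonneg_left hbound h2Ls.le
  calc m * T = 2 * Ls * ((T : ℝ) * (m / (2 * Ls))) := by field_simp
    _ ≤ 2 * Ls * (f (x 0, y 0) - f (x T, y T)) := h6
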